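/- Let P* and Q be probability measures on a product space Ω = Ω₁ × Ω₂∞ with P* ≪ Q, Z = dP*/dQ, and Z_n = E_Q[Z | F_n] the conditional expectation given the first n coordinates. Then the total variation distance between the conditional laws, integrated against the marginal of the first n coordinates under P*, is bounded above by E_Q[|Z − Z_n|]; in particular, if E_Q[|Z_n − Z|] → 0, then the expected total variation distance between the conditional distributions of the future coordinates under P* and under Q, averaged over the first n coordinates under P*, converges to 0. -/

import Mathlib

open MeasureTheory ProbabilityTheory Filter
open scoped ENNReal

set_option maxHeartbeats 1000000 in
lemma stmt2_aux {n : ℕ} (P Q : Measure (ℕ → ℝ)) [IsProbabilityMeasure P] [IsProbabilityMeasure Q]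
    (hac : P ≪ Q)
    (X : (ℕ → ℝ) → (Fin n → ℝ)) (Y : (ℕ → ℝ) → (ℕ → ℝ))
    (hX : Measurable X) (hY : Measurable Y)
    (hemb : MeasurableEmbedding (fun ω => (X ω, Y ω))) :
    ∫ y, (⨆ s : {s : Set (ℕ → ℝ) // MeasurableSet s},
        |((condDistrib Y X P) y s).toReal - ((condDistrib Y X Q) y s).toReal|) ∂(P.map X)
      ≤ ∫ ω, |(P.rnDeriv Q ω).toReal
          - (Q[fun ω' => (P.rnDeriv Q ω').toReal | MeasurableSpace.comap X inferInstance]) ω| ∂Q := by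
  classical
  set pair : (ℕ → ℝ) → (Fin n → ℝ) × (ℕ → ℝ) := fun ω => (X ω, Y ω) with hpair_def
  have hpairm : Measurable pair := hX.prodMk hY
  set ρP : Measure ((Fin n → ℝ) × (ℕ → ℝ)) := P.map pair with hρP_def
  set ρQ : Measure ((Fin n → ℝ) × (ℕ → ℝ)) := Q.map pair with hρQ_def
  haveI : IsProbabilityMeasure ρP := Measure.isProbabilityMeasure_map hpairm.aemeasurable
  haveI : IsProbabilityMeasure ρQ := Measure.isProbabilityMeasure_map hpairm.aemeasurable
  haveI : IsProbabilityMeasure (P.map X) := Measure.isProbabilityMeasure_map hX.aemeasurable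
  haveI : IsProbabilityMeasure (Q.map X) := Measure.isProbabilityMeasure_map hX.aemeasurable
  have hPQ : ρP ≪ ρQ := hac.map hpairm
  set W : (Fin n → ℝ) × (ℕ → ℝ) → ℝ≥0∞ := ρP.rnDeriv ρQ with hW_def
  have hWm : Measurable W := Measure.measurable_rnDeriv _ _
  have hWd : ρQ.withDensity W = ρP := Measure.withDensity_rnDeriv_eq ρP ρQ hPQ
  set ν : Kernel (Fin n → ℝ) (ℕ → ℝ) := condDistrib Y X Q with hν_def
  set μk : Kernel (Fin n → ℝ) (ℕ → ℝ) := condDistrib Y X P with hμk_def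
  have hQdis : (Q.map X) ⊗ₘ ν = ρQ := by
    have h1 : ρQ.fst = Q.map X := Measure.fst_map_prodMk hY
    rw [hν_def, condDistrib_def, ← h1, hρQ_def]
    exact Measure.disintegrate ..
  set Wn : (Fin n → ℝ) → ℝ≥0∞ := fun y => ∫⁻ x, W (y, x) ∂(ν y) with hWn_def
  have hWnm : Measurable Wn := Measurable.lintegral_kernel_prod_right (f := fun y x => W (y, x))
    (by exact hWm.comp (measurable_fst.prodMk measurable_snd))
  -- Claim A : the marginal of P is the Wn-density of the marginal of Q
  have hA : P.map X = (Q.map X).withDensity Wn := by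
    ext B hB
    rw [withDensity_apply _ hB, Measure.map_apply hX hB]
    have h1 : X ⁻¹' B = pair ⁻¹' (B ×ˢ Set.univ) := by
      ext ω; simp [hpair_def]
    rw [h1, ← Measure.map_apply hpairm (hB.prod MeasurableSet.univ), ← hρP_def, ← hWd,
      withDensity_apply _ (hB.prod MeasurableSet.univ), ← hQdis,
      Measure.setLIntegral_compProd hWm hB MeasurableSet.univ]
    simp only [Measure.restrict_univ]
    rfl
  have hP1Q1 : P.map X ≪ Q.map X := by
    rw [hA]; exact withDensity_absolutelyContinuous _ _
  have hWn_int : ∫⁻ y, Wn y ∂(Q.map X) = 1 := by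
    have h1 : ((Q.map X).withDensity Wn) Set.univ = ∫⁻ y, Wn y ∂(Q.map X) := by
      rw [withDensity_apply _ MeasurableSet.univ, Measure.restrict_univ]
    rw [← h1, ← hA]
    simp
  have hWn_lt_top : ∀ᵐ y ∂(Q.map X), Wn y < ∞ :=
    ae_lt_top hWnm (by rw [hWn_int]; exact ENNReal.one_ne_top)
  have hWn_ne_top : ∀ᵐ y ∂(Q.map X), Wn y ≠ ∞ := hWn_lt_top.mono fun _ h => h.ne
  have hWn_ne_top_P : ∀ᵐ y ∂(P.map X), Wn y ≠ ∞ := hP1Q1.ae_le hWn_ne_top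
  have hWn_ne_zero_P : ∀ᵐ y ∂(P.map X), Wn y ≠ 0 := by
    rw [ae_iff]
    simp only [ne_eq, not_not]
    have hBm : MeasurableSet {y | Wn y = 0} := hWnm (measurableSet_singleton 0)
    rw [hA, withDensity_apply _ hBm]
    calc ∫⁻ y in {y | Wn y = 0}, Wn y ∂(Q.map X)
        = ∫⁻ y in {y | Wn y = 0}, 0 ∂(Q.map X) :=
          setLIntegral_congr_fun hBm (fun y hy => hy)
      _ = 0 := lintegral_zero
  -- the explicit disintegration kernel of ρP
  set κ' : Kernel (Fin n → ℝ) (ℕ → ℝ) :=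
    Kernel.withDensity ν (fun y x => (Wn y)⁻¹ * W (y, x)) with hκ'_def
  have hdm : Measurable (Function.uncurry fun y x => (Wn y)⁻¹ * W (y, x)) := by
    apply Measurable.mul
    · exact ((hWnm.comp measurable_fst)).inv
    · exact hWm.comp (measurable_fst.prodMk measurable_snd)
  have hκ'app : ∀ y (s : Set (ℕ → ℝ)),
      κ' y s = (Wn y)⁻¹ * ∫⁻ x in s, W (y, x) ∂(ν y) := by
    intro y s
    rw [hκ'_def, Kernel.withDensity_apply' _ hdm y s]
    exact lintegral_const_mul _ (hWm.comp measurable_prodMk_left)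
  have hκ'fin : IsFiniteKernel κ' := by
    refine ⟨⟨1, ENNReal.one_lt_top, fun y => ?_⟩⟩
    rw [hκ'app y Set.univ, Measure.restrict_univ]
    have hfold : ∫⁻ x, W (y, x) ∂(ν y) = Wn y := by simp only [hWn_def]
    rw [hfold]
    rcases eq_or_ne (Wn y) 0 with h0 | h0
    · rw [h0]; simp
    · rcases eq_or_ne (Wn y) ∞ with ht | ht
      · rw [ht]; simp
      · rw [ENNReal.inv_mul_cancel h0 ht]
  haveI := hκ'fin
  -- ρP disintegrates with κ'
  have hPdis' : ρP = (P.map X) ⊗ₘ κ' := by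
    ext s hs
    rw [Measure.compProd_apply hs, hA,
      lintegral_withDensity_eq_lintegral_mul _ hWnm (Kernel.measurable_kernel_prodMk_left hs)]
    have hLHS : ρP s = ∫⁻ y, ∫⁻ x in Prod.mk y ⁻¹' s, W (y, x) ∂(ν y) ∂(Q.map X) := by
      rw [← hWd, withDensity_apply _ hs, ← lintegral_indicator hs, ← hQdis,
        Measure.lintegral_compProd (hWm.indicator hs)]
      refine lintegral_congr fun y => ?_
      rw [← lintegral_indicator (measurable_prodMk_left hs)]
      refine lintegral_congr fun x => ?_
      by_cases hmem : (y, x) ∈ s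
      · simp [Set.indicator_apply, hmem]
      · simp [Set.indicator_apply, hmem]
    rw [hLHS]
    refine lintegral_congr_ae ?_
    filter_upwards [hWn_ne_top] with y hy
    simp only [Pi.mul_apply]
    rw [hκ'app y _]
    rcases eq_or_ne (Wn y) 0 with h0 | h0
    · have hle : ∫⁻ x in Prod.mk y ⁻¹' s, W (y, x) ∂(ν y) ≤ Wn y := by
        rw [hWn_def]
        exact lintegral_mono' Measure.restrict_le_self le_rfl
      have : ∫⁻ x in Prod.mk y ⁻¹' s, W (y, x) ∂(ν y) = 0 := le_antisymm (h0 ▸ hle) zero_le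
      rw [this, h0]
      simp
    · rw [← mul_assoc, ENNReal.mul_inv_cancel h0 hy, one_mul]
  have huniq : ∀ᵐ y ∂(P.map X), κ' y = μk y :=
    (condDistrib_ae_eq_of_measure_eq_compProd_of_measurable hX hY hPdis').symm
  -- the pointwise total variation bound
  set D : (Fin n → ℝ) → ℝ := fun y => ∫ x, |(W (y, x)).toReal - (Wn y).toReal| ∂(ν y) with hD_def
  set f : (Fin n → ℝ) → ℝ := fun y => ⨆ s : {s : Set (ℕ → ℝ) // MeasurableSet s},
    |(μk y s).toReal - (ν y s).toReal| with hf_def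
  have hbound : ∀ᵐ y ∂(P.map X), f y ≤ (Wn y).toReal⁻¹ * D y := by
    filter_upwards [huniq, hWn_ne_zero_P, hWn_ne_top_P] with y hy h0 htop
    have hWym : Measurable fun x => W (y, x) := hWm.comp (measurable_const.prodMk measurable_id)
    have hc : 0 < (Wn y).toReal := ENNReal.toReal_pos h0 htop
    have hlint_ne : ∫⁻ x, W (y, x) ∂(ν y) ≠ ∞ := by
      have hfold : ∫⁻ x, W (y, x) ∂(ν y) = Wn y := by simp only [hWn_def]
      rw [hfold]; exact htop
    have hint : Integrable (fun x => (W (y, x)).toReal) (ν y) :=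
      integrable_toReal_of_lintegral_ne_top hWym.aemeasurable hlint_ne
    have haef : ∀ᵐ x ∂(ν y), W (y, x) < ∞ := ae_lt_top hWym hlint_ne
    have hDnonneg : 0 ≤ (Wn y).toReal⁻¹ * D y :=
      mul_nonneg (inv_nonneg.2 hc.le) (integral_nonneg fun x => abs_nonneg _)
    refine Real.iSup_le (fun s => ?_) hDnonneg
    obtain ⟨s, hs⟩ := s
    have hμks : μk y s = (Wn y)⁻¹ * ∫⁻ x in s, W (y, x) ∂(ν y) := by
      rw [← hy, hκ'app y s]
    have hsr : (∫⁻ x in s, W (y, x) ∂(ν y)).toReal = ∫ x in s, (W (y, x)).toReal ∂(ν y) :=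
      (integral_toReal hWym.aemeasurable.restrict (ae_restrict_of_ae haef)).symm
    set c := (Wn y).toReal with hc_def
    have hAval : (μk y s).toReal = c⁻¹ * ∫ x in s, (W (y, x)).toReal ∂(ν y) := by
      rw [hμks, ENNReal.toReal_mul, ENNReal.toReal_inv, hsr]
    set B := ((ν y) s).toReal with hB_def
    have hconst : ∫ x in s, c ∂(ν y) = B * c := by
      rw [setIntegral_const, smul_eq_mul, measureReal_def]
    have key : |(μk y s).toReal - B| = c⁻¹ * |∫ x in s, ((W (y, x)).toReal - c) ∂(ν y)| := by
      rw [hAval]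
      have h2 : ∫ x in s, ((W (y, x)).toReal - c) ∂(ν y)
          = (∫ x in s, (W (y, x)).toReal ∂(ν y)) - B * c := by
        rw [integral_sub hint.integrableOn (integrable_const c).integrableOn, hconst]
      rw [h2]
      have h3 : c⁻¹ * (∫ x in s, (W (y, x)).toReal ∂(ν y)) - B
          = c⁻¹ * ((∫ x in s, (W (y, x)).toReal ∂(ν y)) - B * c) := by
        field_simp
      rw [h3, abs_mul, abs_of_nonneg (inv_nonneg.2 hc.le)]
    rw [key]
    have h4a : |∫ x in s, ((W (y, x)).toReal - c) ∂(ν y)|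
        ≤ ∫ x in s, |(W (y, x)).toReal - c| ∂(ν y) := by
      rw [← Real.norm_eq_abs]
      refine le_trans (norm_integral_le_integral_norm _) ?_
      refine le_of_eq (integral_congr_ae (Filter.Eventually.of_forall fun x => ?_))
      simp [Real.norm_eq_abs]
    have h4b : ∫ x in s, |(W (y, x)).toReal - c| ∂(ν y)
        ≤ ∫ x, |(W (y, x)).toReal - c| ∂(ν y) :=
      setIntegral_le_integral (hint.sub (integrable_const c)).abs
        (Filter.Eventually.of_forall fun x => abs_nonneg _)
    have h4 := le_trans h4a h4b
    calc c⁻¹ * |∫ x in s, ((W (y, x)).toReal - c) ∂(ν y)|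
        ≤ c⁻¹ * ∫ x, |(W (y, x)).toReal - c| ∂(ν y) :=
          mul_le_mul_of_nonneg_left h4 (inv_nonneg.2 hc.le)
      _ = (Wn y).toReal⁻¹ * D y := rfl
  -- identify the conditional expectation
  set ZZ : (ℕ → ℝ) → ℝ := fun ω => (P.rnDeriv Q ω).toReal with hZZ_def
  have hZint : Integrable ZZ Q := Measure.integrable_toReal_rnDeriv
  have hm : MeasurableSpace.comap X inferInstance ≤ (inferInstance : MeasurableSpace (ℕ → ℝ)) :=
    hX.comap_le
  haveI : SigmaFinite (Q.trim hm) := by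
    haveI : IsFiniteMeasure (Q.trim hm) := isFiniteMeasure_trim hm
    infer_instance
  set g : (ℕ → ℝ) → ℝ := fun ω => (Wn (X ω)).toReal with hg_def
  have hgint : Integrable g Q := by
    refine integrable_toReal_of_lintegral_ne_top (hWnm.comp hX).aemeasurable ?_
    have hmap : ∫⁻ x, Wn (X x) ∂Q = ∫⁻ y, Wn y ∂(Q.map X) := (lintegral_map hWnm hX).symm
    rw [hmap, hWn_int]
    exact ENNReal.one_ne_top
  have hgZn : g =ᵐ[Q] Q[ZZ | MeasurableSpace.comap X inferInstance] := by
    refine ae_eq_condExp_of_forall_setIntegral_eq hm hZint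
      (fun s _ _ => hgint.integrableOn) (fun s hs _ => ?_) ?_
    · obtain ⟨B, hB, rfl⟩ := hs
      have h1 : ∫ ω in X ⁻¹' B, g ω ∂Q = ∫ y in B, (Wn y).toReal ∂(Q.map X) :=
        (setIntegral_map hB (hWnm.ennreal_toReal.aestronglyMeasurable) hX.aemeasurable).symm
      have h2 : ∫ y in B, (Wn y).toReal ∂(Q.map X) = (∫⁻ y in B, Wn y ∂(Q.map X)).toReal :=
        integral_toReal hWnm.aemeasurable.restrict (ae_restrict_of_ae hWn_lt_top)
      have h3 : ∫⁻ y in B, Wn y ∂(Q.map X) = P (X ⁻¹' B) := by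
        rw [← withDensity_apply _ hB, ← hA, Measure.map_apply hX hB]
      have h4 : P (X ⁻¹' B) = ∫⁻ ω in X ⁻¹' B, P.rnDeriv Q ω ∂Q :=
        (Measure.setLIntegral_rnDeriv hac _).symm
      have h5 : ∫ ω in X ⁻¹' B, ZZ ω ∂Q = (∫⁻ ω in X ⁻¹' B, P.rnDeriv Q ω ∂Q).toReal :=
        integral_toReal (Measure.measurable_rnDeriv P Q).aemeasurable.restrict
          (ae_restrict_of_ae (Measure.rnDeriv_lt_top P Q))
      rw [h1, h2, h3, h4, h5]
    · exact StronglyMeasurable.aestronglyMeasurable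
        (Measurable.stronglyMeasurable
          ((hWnm.comp (Measurable.of_comap_le le_rfl)).ennreal_toReal))
  have hWpair : (fun ω => W (pair ω)) =ᵐ[Q] P.rnDeriv Q := hemb.rnDeriv_map P Q
  -- the L¹ quantity
  set L : ℝ≥0∞ := ∫⁻ ω, ENNReal.ofReal
    |ZZ ω - (Q[ZZ | MeasurableSpace.comap X inferInstance]) ω| ∂Q with hL_def
  have hdiff_int : Integrable
      (fun ω => ZZ ω - (Q[ZZ | MeasurableSpace.comap X inferInstance]) ω) Q :=
    hZint.sub integrable_condExp
  have hLne : L ≠ ∞ := by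
    have h1 : L = ∫⁻ ω, ↑‖ZZ ω - (Q[ZZ | MeasurableSpace.comap X inferInstance]) ω‖₊ ∂Q := by
      refine lintegral_congr fun ω => ?_
      rw [← enorm_eq_nnnorm, Real.enorm_eq_ofReal_abs]
    rw [h1]
    exact hdiff_int.2.ne
  have hRHS : ∫ ω, |ZZ ω - (Q[ZZ | MeasurableSpace.comap X inferInstance]) ω| ∂Q = L.toReal := by
    rw [hL_def]
    exact integral_eq_lintegral_of_nonneg_ae (Filter.Eventually.of_forall fun ω => abs_nonneg _)
      hdiff_int.abs.aestronglyMeasurable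
  -- E : the inner lintegral
  set E : (Fin n → ℝ) → ℝ≥0∞ :=
    fun y => ∫⁻ x, ENNReal.ofReal |(W (y, x)).toReal - (Wn y).toReal| ∂(ν y) with hE_def
  have hFm : Measurable fun p : (Fin n → ℝ) × (ℕ → ℝ) =>
      ENNReal.ofReal |(W p).toReal - (Wn p.1).toReal| := by
    apply ENNReal.measurable_ofReal.comp
    exact (hWm.ennreal_toReal.sub ((hWnm.comp measurable_fst).ennreal_toReal)).abs
  have hEQ1 : ∫⁻ y, E y ∂(Q.map X) = L := by
    have h1 : ∫⁻ y, E y ∂(Q.map X)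
        = ∫⁻ p, ENNReal.ofReal |(W p).toReal - (Wn p.1).toReal| ∂((Q.map X) ⊗ₘ ν) :=
      (Measure.lintegral_compProd hFm).symm
    rw [h1, hQdis, hρQ_def, lintegral_map hFm hpairm]
    refine lintegral_congr_ae ?_
    filter_upwards [hWpair, hgZn] with ω h1 h2
    have h1' : W (pair ω) = P.rnDeriv Q ω := h1
    have h2' : (Wn (X ω)).toReal = (Q[ZZ | MeasurableSpace.comap X inferInstance]) ω := h2
    rw [h1', h2']
  -- the main chain
  by_cases hfm : AEStronglyMeasurable f (P.map X)
  · have hfnonneg : ∀ y, 0 ≤ f y := fun y => Real.iSup_nonneg fun s => abs_nonneg _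
    have hLHS : ∫ y, f y ∂(P.map X) = (∫⁻ y, ENNReal.ofReal (f y) ∂(P.map X)).toReal :=
      integral_eq_lintegral_of_nonneg_ae (Filter.Eventually.of_forall hfnonneg) hfm
    have hchain : ∫⁻ y, ENNReal.ofReal (f y) ∂(P.map X) ≤ L := by
      have hae : AEMeasurable (fun y => ENNReal.ofReal (f y)) ((Q.map X).withDensity Wn) := by
        rw [← hA]
        exact ENNReal.measurable_ofReal.comp_aemeasurable hfm.aemeasurable
      rw [hA, lintegral_withDensity_eq_lintegral_mul₀' hWnm.aemeasurable hae]
      have hbound' : ∀ᵐ y ∂(Q.map X), Wn y ≠ 0 → f y ≤ (Wn y).toReal⁻¹ * D y := by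
        have := hbound
        rw [hA, ae_withDensity_iff hWnm] at this
        exact this
      have hkey : ∀ᵐ y ∂(Q.map X), Wn y * ENNReal.ofReal (f y) ≤ E y := by
        filter_upwards [hbound', hWn_ne_top] with y hy htop
        rcases eq_or_ne (Wn y) 0 with h0 | h0
        · rw [h0, zero_mul]
          exact zero_le
        · have hfy := hy h0
          have hc : 0 < (Wn y).toReal := ENNReal.toReal_pos h0 htop
          have hWym : Measurable fun x => W (y, x) :=
            hWm.comp (measurable_const.prodMk measurable_id)
          have hlint_ne : ∫⁻ x, W (y, x) ∂(ν y) ≠ ∞ := by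
            have hfold : ∫⁻ x, W (y, x) ∂(ν y) = Wn y := by simp only [hWn_def]
            rw [hfold]; exact htop
          have hint : Integrable (fun x => (W (y, x)).toReal) (ν y) :=
            integrable_toReal_of_lintegral_ne_top hWym.aemeasurable hlint_ne
          have hDint : Integrable (fun x => |(W (y, x)).toReal - (Wn y).toReal|) (ν y) :=
            (hint.sub (integrable_const _)).abs
          have hED : E y = ENNReal.ofReal (D y) :=
            (ofReal_integral_eq_lintegral_ofReal hDint
              (Filter.Eventually.of_forall fun x => abs_nonneg _)).symm
          calc Wn y * ENNReal.ofReal (f y)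
              ≤ Wn y * ENNReal.ofReal ((Wn y).toReal⁻¹ * D y) :=
                mul_le_mul_right (ENNReal.ofReal_le_ofReal hfy) _
            _ = ENNReal.ofReal ((Wn y).toReal) *
                (ENNReal.ofReal ((Wn y).toReal⁻¹) * ENNReal.ofReal (D y)) := by
                rw [ENNReal.ofReal_mul (inv_nonneg.2 hc.le), ENNReal.ofReal_toReal htop]
            _ = ENNReal.ofReal ((Wn y).toReal * (Wn y).toReal⁻¹) * ENNReal.ofReal (D y) := by
                rw [← mul_assoc, ← ENNReal.ofReal_mul hc.le]
            _ = ENNReal.ofReal (D y) := by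
                rw [mul_inv_cancel₀ hc.ne', ENNReal.ofReal_one, one_mul]
            _ = E y := hED.symm
      calc ∫⁻ y, (Wn * fun y => ENNReal.ofReal (f y)) y ∂(Q.map X)
          ≤ ∫⁻ y, E y ∂(Q.map X) := lintegral_mono_ae (by
            filter_upwards [hkey] with y hy
            simpa using hy)
        _ = L := hEQ1
    calc ∫ y, f y ∂(P.map X) = (∫⁻ y, ENNReal.ofReal (f y) ∂(P.map X)).toReal := hLHS
      _ ≤ L.toReal := ENNReal.toReal_mono hLne hchain
      _ = ∫ ω, |ZZ ω - (Q[ZZ | MeasurableSpace.comap X inferInstance]) ω| ∂Q := hRHS.symm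
  · rw [hf_def] at hfm
    rw [integral_non_aestronglyMeasurable hfm]
    exact integral_nonneg fun ω => abs_nonneg _

/-- The expected total variation distance between the conditional laws of the future
coordinates under `P*` and under `Q`, averaged over the first `n` coordinates under `P*`,
is bounded by `E_Q[|Z − Z_n|]`; hence it converges to `0` when `E_Q[|Z_n − Z|] → 0`. -/
theorem stmt2
    (P Q : Measure (ℕ → ℝ)) [IsProbabilityMeasure P] [IsProbabilityMeasure Q]
    (hac : P ≪ Q)
    (past : (n : ℕ) → (ℕ → ℝ) → (Fin n → ℝ))
    (hpast : ∀ n, past n = fun ω (i : Fin n) => ω i)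
    (future : (n : ℕ) → (ℕ → ℝ) → (ℕ → ℝ))
    (hfuture : ∀ n, future n = fun ω i => ω (i + n))
    (Z : (ℕ → ℝ) → ℝ) (hZ : Z = fun ω => (P.rnDeriv Q ω).toReal)
    (Zn : ℕ → (ℕ → ℝ) → ℝ)
    (hZn : ∀ n, Zn n = Q[Z | MeasurableSpace.comap (past n) inferInstance]) :
    (∀ n, ∫ y,
        (⨆ s : {s : Set (ℕ → ℝ) // MeasurableSet s},
          |((condDistrib (future n) (past n) P) y s).toReal
            - ((condDistrib (future n) (past n) Q) y s).toReal|)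
        ∂(P.map (past n))
      ≤ ∫ ω, |Z ω - Zn n ω| ∂Q) ∧
    (Tendsto (fun n => ∫ ω, |Zn n ω - Z ω| ∂Q) atTop (nhds 0) →
      Tendsto (fun n => ∫ y,
        (⨆ s : {s : Set (ℕ → ℝ) // MeasurableSet s},
          |((condDistrib (future n) (past n) P) y s).toReal
            - ((condDistrib (future n) (past n) Q) y s).toReal|)
        ∂(P.map (past n))) atTop (nhds 0)) := by
  have key : ∀ n, ∫ y,
      (⨆ s : {s : Set (ℕ → ℝ) // MeasurableSet s},
        |((condDistrib (future n) (past n) P) y s).toReal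
          - ((condDistrib (future n) (past n) Q) y s).toReal|)
      ∂(P.map (past n)) ≤ ∫ ω, |Z ω - Zn n ω| ∂Q := by
    intro n
    have hX : Measurable (past n) := by
      rw [hpast]
      exact measurable_pi_lambda _ fun i => measurable_pi_apply _
    have hY : Measurable (future n) := by
      rw [hfuture]
      exact measurable_pi_lambda _ fun i => measurable_pi_apply _
    have hinj : Function.Injective (fun ω => (past n ω, future n ω)) := by
      rw [hpast n, hfuture n]
      intro a b hab
      simp only [Prod.mk.injEq] at hab
      funext i
      rcases lt_or_ge i n with h | h
      · exact congrFun hab.1 ⟨i, h⟩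
      · have := congrFun hab.2 (i - n)
        simpa [Nat.sub_add_cancel h] using this
    have hemb : MeasurableEmbedding (fun ω => (past n ω, future n ω)) :=
      (hX.prodMk hY).measurableEmbedding hinj
    rw [hZn n, hZ]
    exact stmt2_aux P Q hac (past n) (future n) hX hY hemb
  refine ⟨key, fun hcv => ?_⟩
  have hswap : (fun n => ∫ ω, |Z ω - Zn n ω| ∂Q) = fun n => ∫ ω, |Zn n ω - Z ω| ∂Q :=
    funext fun n => integral_congr_ae (Filter.Eventually.of_forall fun ω => abs_sub_comm _ _)
  refine tendsto_of_tendsto_of_tendsto_of_le_of_le tendsto_const_nhds (hswap ▸ hcv)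
    (fun n => integral_nonneg fun y => Real.iSup_nonneg fun s => abs_nonneg _) key
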